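/- Let G be obtained from a path v_1 v_2 ⋯ v_n by adding loops at some subset of vertices. Then any configuration x of G can be transformed, by a sequence of valid lit-only moves all performed at vertices in {v_2, …, v_n}, to a configuration with light number at most one. -/

import Mathlib

structure LoopGraph (V : Type) [Fintype V] [DecidableEq V] where
  N : V → Finset V
  symm : ∀ u v, u ∈ N v ↔ v ∈ N u

namespace LoopGraph

variable {V : Type} [Fintype V] [DecidableEq V]

/-- Indicator vector of a finite set of vertices, as a configuration over `F_2`. -/
def chi (S : Finset V) : V → ZMod 2 := fun u => if u ∈ S then 1 else 0

/-- One regular move of the sigma-game. -/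
def RegStep (G : LoopGraph V) (x y : V → ZMod 2) : Prop :=
  ∃ v, y = x + chi (G.N v)

/-- One valid move of the lit-only sigma-game. -/
def ValidStep (G : LoopGraph V) (x y : V → ZMod 2) : Prop :=
  ∃ v, x v = 1 ∧ y = x + chi (G.N v)

def RegReach (G : LoopGraph V) : (V → ZMod 2) → (V → ZMod 2) → Prop :=
  Relation.ReflTransGen G.RegStep

def ValidReach (G : LoopGraph V) : (V → ZMod 2) → (V → ZMod 2) → Prop :=
  Relation.ReflTransGen G.ValidStep

/-- The light number of a configuration. -/
def L (x : V → ZMod 2) : ℕ := (Finset.univ.filter fun v => x v = 1).card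

/-- Minimum light number of a configuration for the sigma-game. -/
noncomputable def ML (G : LoopGraph V) (x : V → ZMod 2) : ℕ :=
  sInf (L '' {y | G.RegReach x y})

/-- Minimum light number of a configuration for the lit-only sigma-game. -/
noncomputable def MLs (G : LoopGraph V) (x : V → ZMod 2) : ℕ :=
  sInf (L '' {y | G.ValidReach x y})

/-- Minimum light number of the sigma-game on `G`. -/
noncomputable def MLmax (G : LoopGraph V) : ℕ := ⨆ x, G.ML x

/-- Minimum light number of the lit-only sigma-game on `G`. -/
noncomputable def MLsmax (G : LoopGraph V) : ℕ := ⨆ x, G.MLs x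

/-- Non-loop adjacency. -/
def Adj (G : LoopGraph V) (u w : V) : Prop := u ≠ w ∧ w ∈ G.N u

def Connected (G : LoopGraph V) : Prop :=
  ∀ u w : V, Relation.ReflTransGen G.Adj u w

/-- Degree, counting non-loop edges only. -/
def deg (G : LoopGraph V) (v : V) : ℕ := ((G.N v).erase v).card

/-- Underlying simple graph (loops discarded). -/
def simple (G : LoopGraph V) : SimpleGraph V where
  Adj := G.Adj
  symm := by
    constructor
    intro u w h
    exact ⟨h.1.symm, (G.symm w u).mp h.2⟩
  loopless := by constructor; intro u h; exact h.1 rfl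

/-- Induced subgraph on a finite vertex subset. -/
def induce (G : LoopGraph V) (T : Finset V) : LoopGraph {u // u ∈ T} where
  N u := Finset.univ.filter fun w => w.val ∈ G.N u.val
  symm := by
    intro u w
    simp only [Finset.mem_filter, Finset.mem_univ, true_and]
    exact G.symm u.1 w.1

end LoopGraph

namespace PathProofAux

open LoopGraph

variable {n : ℕ}

/-- Lit-only step at a vertex of index at least `t`. -/
def StepGe (G : LoopGraph (Fin n)) (t : ℕ) (a b : Fin n → ZMod 2) : Prop :=
  ∃ v : Fin n, t ≤ v.val ∧ a v = 1 ∧ b = a + chi (G.N v)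

lemma zmod2_cases : ∀ a : ZMod 2, a = 0 ∨ a = 1 := by decide

lemma chi_adj (G : LoopGraph (Fin n))
    (hN : ∀ i j : Fin n, i ≠ j →
      (j ∈ G.N i ↔ (i.val + 1 = j.val ∨ j.val + 1 = i.val)))
    {u v : Fin n} (h : v ≠ u)
    (hadj : v.val + 1 = u.val ∨ u.val + 1 = v.val) : chi (G.N v) u = 1 := by
  show (if u ∈ G.N v then (1 : ZMod 2) else 0) = 1
  rw [if_pos ((hN v u h).mpr hadj)]

lemma chi_far (G : LoopGraph (Fin n))
    (hN : ∀ i j : Fin n, i ≠ j →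
      (j ∈ G.N i ↔ (i.val + 1 = j.val ∨ j.val + 1 = i.val)))
    {u v : Fin n} (h : v ≠ u)
    (hadj : ¬(v.val + 1 = u.val ∨ u.val + 1 = v.val)) : chi (G.N v) u = 0 := by
  show (if u ∈ G.N v then (1 : ZMod 2) else 0) = 0
  rw [if_neg (fun hm => hadj ((hN v u h).mp hm))]

lemma stepGe_mono (G : LoopGraph (Fin n)) {t t' : ℕ} (h : t ≤ t') {a b : Fin n → ZMod 2} :
    StepGe G t' a b → StepGe G t a b := by
  rintro ⟨v, hv, h1, h2⟩
  exact ⟨v, le_trans h hv, h1, h2⟩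

/-- Lemma X: if some vertex of index ≥ t+1 is lit, then using moves at indices ≥ t+2
we can reach a configuration where vertex t+1 is lit, without changing indices ≤ t. -/
lemma lemX (G : LoopGraph (Fin n))
    (hN : ∀ i j : Fin n, i ≠ j →
      (j ∈ G.N i ↔ (i.val + 1 = j.val ∨ j.val + 1 = i.val))) :
    ∀ (k t : ℕ) (x : Fin n → ZMod 2), n ≤ t + k →
      (∃ j : Fin n, t + 1 ≤ j.val ∧ x j = 1) →
      ∃ y, Relation.ReflTransGen (StepGe G (t + 2)) x y ∧
        (∀ i : Fin n, i.val = t + 1 → y i = 1) ∧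
        (∀ i : Fin n, i.val ≤ t → y i = x i) := by
  intro k
  induction k with
  | zero =>
    rintro t x hn ⟨j, hjt, _⟩
    exact absurd j.isLt (by omega)
  | succ k ih =>
    rintro t x hn ⟨j, hjt, hjx⟩
    have ht1 : t + 1 < n := lt_of_le_of_lt hjt j.isLt
    set v1 : Fin n := ⟨t + 1, ht1⟩ with hv1
    rcases zmod2_cases (x v1) with h0 | h1
    · -- vertex t+1 is off, so j has index ≥ t+2
      have hjne : j ≠ v1 := by
        intro he; rw [he, h0] at hjx; exact absurd hjx (by decide)
      have hjt2 : t + 2 ≤ j.val := by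
        rcases Nat.eq_or_lt_of_le hjt with he | hl
        · exact absurd (Fin.ext he.symm) hjne
        · omega
      have ht2 : t + 2 < n := lt_of_le_of_lt hjt2 j.isLt
      obtain ⟨y, hr, hy1, hyp⟩ := ih (t + 1) x (by omega) ⟨j, by omega, hjx⟩
      set v2 : Fin n := ⟨t + 2, ht2⟩ with hv2
      have hyv2 : y v2 = 1 := hy1 v2 rfl
      refine ⟨y + chi (G.N v2), ?_, ?_, ?_⟩
      · exact (Relation.ReflTransGen.mono (p := StepGe G (t + 2)) (by intro a b h; exact stepGe_mono G (by omega) h) _ _ hr).tail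
          ⟨v2, le_refl _, hyv2, rfl⟩
      · intro i hi
        have hiv : i = v1 := Fin.ext hi
        subst hiv
        have hne : v2 ≠ v1 := by
          intro he
          have : (t + 2 : ℕ) = t + 1 := congrArg Fin.val he
          omega
        have hchi : chi (G.N v2) v1 = 1 :=
          chi_adj G hN hne (Or.inr (by simp [hv1, hv2]))
        have hyv1 : y v1 = x v1 := hyp v1 (le_refl _)
        rw [Pi.add_apply, hchi, hyv1, h0]
        decide
      · intro i hi
        have hne : v2 ≠ i := by
          intro he
          have : (t + 2 : ℕ) = i.val := congrArg Fin.val he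
          omega
        have hchi : chi (G.N v2) i = 0 := chi_far G hN hne (by
          simp only [hv2]
          omega)
        rw [Pi.add_apply, hchi, add_zero, hyp i (by omega)]
    · exact ⟨x, Relation.ReflTransGen.refl,
        fun i hi => by rw [Fin.ext hi (b := v1)]; exact h1,
        fun i _ => rfl⟩

/-- Lemma W: if everything below index t is off, then using moves at indices ≥ t+1
we can reach a configuration with at most one lit vertex. -/
lemma lemW (G : LoopGraph (Fin n))
    (hN : ∀ i j : Fin n, i ≠ j →
      (j ∈ G.N i ↔ (i.val + 1 = j.val ∨ j.val + 1 = i.val))) :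
    ∀ (k t : ℕ) (x : Fin n → ZMod 2), n ≤ t + k →
      (∀ i : Fin n, i.val < t → x i = 0) →
      ∃ y, Relation.ReflTransGen (StepGe G (t + 1)) x y ∧ L y ≤ 1 := by
  intro k
  induction k with
  | zero =>
    intro t x hn hx
    refine ⟨x, Relation.ReflTransGen.refl, ?_⟩
    have he : (Finset.univ.filter fun v => x v = 1) = ∅ := by
      apply Finset.eq_empty_of_forall_notMem
      intro a ha
      rw [Finset.mem_filter] at ha
      have := hx a (by omega)
      rw [this] at ha
      exact absurd ha.2 (by decide)
    show (Finset.univ.filter fun v => x v = 1).card ≤ 1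
    rw [he]
    simp
  | succ k ih =>
    intro t x hn hx
    by_cases h : ∃ j : Fin n, t + 1 ≤ j.val ∧ x j = 1
    · obtain ⟨j, hjt, hjx⟩ := h
      have htn : t < n := lt_of_le_of_lt (by omega) j.isLt
      have ht1 : t + 1 < n := lt_of_le_of_lt hjt j.isLt
      set vt : Fin n := ⟨t, htn⟩ with hvt
      rcases zmod2_cases (x vt) with h0 | h1
      · -- vertex t is off; recurse with boundary t+1
        obtain ⟨y, hr, hL⟩ := ih (t + 1) x (by omega) (by
          intro i hi
          rcases Nat.lt_or_ge i.val t with hl | hg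
          · exact hx i hl
          · have : i = vt := Fin.ext (show i.val = t by omega)
            rw [this]; exact h0)
        exact ⟨y, Relation.ReflTransGen.mono (p := StepGe G (t + 1)) (by intro a b hab; exact stepGe_mono G (by omega) hab) _ _ hr, hL⟩
      · -- vertex t is on: bring a light to t+1, press t+1 to kill vertex t
        obtain ⟨y, hr, hy1, hyp⟩ := lemX G hN (k + 1) t x (by omega) ⟨j, hjt, hjx⟩
        set v1 : Fin n := ⟨t + 1, ht1⟩ with hv1
        have hstep : StepGe G (t + 1) y (y + chi (G.N v1)) :=
          ⟨v1, le_refl _, hy1 v1 rfl, rfl⟩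
        set z := y + chi (G.N v1) with hz
        have hz0 : ∀ i : Fin n, i.val < t + 1 → z i = 0 := by
          intro i hi
          rcases Nat.lt_or_ge i.val t with hl | hg
          · have hne : v1 ≠ i := by
              intro he
              have : (t + 1 : ℕ) = i.val := congrArg Fin.val he
              omega
            have hchi : chi (G.N v1) i = 0 := chi_far G hN hne (by
              simp only [hv1]
              omega)
            rw [hz, Pi.add_apply, hchi, add_zero, hyp i (by omega)]
            exact hx i hl
          · have hiv : i = vt := Fin.ext (show i.val = t by omega)
            subst hiv
            have hne : v1 ≠ vt := by
              intro he
              have : (t + 1 : ℕ) = t := congrArg Fin.val he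
              omega
            have hchi : chi (G.N v1) vt = 1 :=
              chi_adj G hN hne (Or.inr (by simp [hv1, hvt]))
            rw [hz, Pi.add_apply, hchi, hyp vt (le_refl _), h1]
            decide
        obtain ⟨w, hrw, hL⟩ := ih (t + 1) z (by omega) hz0
        refine ⟨w, ?_, hL⟩
        exact ((Relation.ReflTransGen.mono (p := StepGe G (t + 1)) (by intro a b hab; exact stepGe_mono G (by omega) hab) _ _ hr).tail hstep).trans
          (Relation.ReflTransGen.mono (p := StepGe G (t + 1)) (by intro a b hab; exact stepGe_mono G (by omega) hab) _ _ hrw)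
    · -- all lit vertices have index ≤ t, and index < t is off: at most one lit vertex
      refine ⟨x, Relation.ReflTransGen.refl, Finset.card_le_one.mpr ?_⟩
      intro a ha b hb
      rw [Finset.mem_filter] at ha hb
      have hat : a.val = t := by
        rcases Nat.lt_trichotomy a.val t with hl | he | hg
        · rw [hx a hl] at ha; exact absurd ha.2 (by decide)
        · exact he
        · exact absurd ⟨a, by omega, ha.2⟩ h
      have hbt : b.val = t := by
        rcases Nat.lt_trichotomy b.val t with hl | he | hg
        · rw [hx b hl] at hb; exact absurd hb.2 (by decide)
        · exact he
        · exact absurd ⟨b, by omega, hb.2⟩ h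
      exact Fin.ext (hat.trans hbt.symm)

end PathProofAux

open LoopGraph in
theorem path_with_loops_litonly_off_first_vertex
    (n : ℕ) (G : LoopGraph (Fin n))
    (hN : ∀ i j : Fin n, i ≠ j →
      (j ∈ G.N i ↔ (i.val + 1 = j.val ∨ j.val + 1 = i.val)))
    (x : Fin n → ZMod 2) :
    ∃ y : Fin n → ZMod 2, L y ≤ 1 ∧
      Relation.ReflTransGen
        (fun a b => ∃ v : Fin n, 1 ≤ v.val ∧ a v = 1 ∧ b = a + chi (G.N v))
        x y := by
  obtain ⟨y, hr, hL⟩ := PathProofAux.lemW G hN n 0 x (by omega) (fun i hi => absurd hi (by omega))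
  exact ⟨y, hL, Relation.ReflTransGen.mono (p := fun a b => ∃ v : Fin n, 1 ≤ v.val ∧ a v = 1 ∧ b = a + chi (G.N v)) (by intro a b hab; exact hab) _ _ hr⟩
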